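/- Let n ≥ 1 and N ≥ 0 be integers, and let α ∈ [0,1] be a point at which the Bernoulli polynomial B_{n+1} attains its maximum on [0,1]. Then every real-valued trigonometric polynomial Q of degree at most N satisfying 𝓑_{n+1}(x) ≤ Q(x) for all x ∈ ℝ satisfies ∫₀¹ (Q(x) − 𝓑_{n+1}(x)) dx ≥ B_{n+1}(α)/(N+1)^{n+1}. -/

import Mathlib

open MeasureTheory

/-- The `m`-th Bernoulli polynomial evaluated at a real number `x`,
with the generating function `t e^{xt}/(e^t - 1) = ∑ B_m(x) t^m / m!`. -/
noncomputable def bernoulliPoly (m : ℕ) (x : ℝ) : ℝ :=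
  Polynomial.aeval x (Polynomial.bernoulli m)

/-- The `m`-th Bernoulli periodic function `𝓑_m(x) = B_m(x - ⌊x⌋)`. -/
noncomputable def bernoulliPer (m : ℕ) (x : ℝ) : ℝ :=
  bernoulliPoly m (x - ⌊x⌋)

/-- `f : ℝ → ℂ` is a trigonometric polynomial of degree at most `N`:
`f x = ∑_{k=-N}^{N} c_k e^{2πikx}`. -/
def IsTrigPoly (N : ℕ) (f : ℝ → ℂ) : Prop :=
  ∃ c : ℤ → ℂ, ∀ x : ℝ,
    f x = ∑ k ∈ Finset.Icc (-(N : ℤ)) (N : ℤ),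
      c k * Complex.exp (2 * (Real.pi : ℂ) * Complex.I * (k : ℂ) * (x : ℂ))

open Complex
lemma bernoulliFun_zero' (x : ℝ) : bernoulliFun 0 x = 1 := by
  simp [bernoulliFun, Polynomial.bernoulli_zero]

lemma hasDerivAt_bF_affine (k : ℕ) (j : ℝ) (M : ℝ) (x : ℝ) :
    HasDerivAt (fun x => bernoulliFun (k+1) ((x + j)/M))
      ((k+1) * bernoulliFun k ((x + j)/M) / M) x := by
  have h1 : HasDerivAt (fun x : ℝ => (x + j)/M) (1/M) x :=
    ((hasDerivAt_id x).add_const j).div_const M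
  have h2 := (hasDerivAt_bernoulliFun (k+1) ((x+j)/M)).comp x h1
  refine h2.congr_deriv ?_
  push_cast
  ring

lemma raabe : ∀ (m : ℕ) (M : ℕ), 0 < M → ∀ x : ℝ,
    (∑ j ∈ Finset.range M, bernoulliFun m ((x + j)/M)) * (M:ℝ)^m
      = M * bernoulliFun m x := by
  intro m
  induction m with
  | zero => intro M hM x; simp [bernoulliFun_zero']
  | succ m IH =>
    intro M hM x
    have hM0 : (M:ℝ) ≠ 0 := Nat.cast_ne_zero.mpr hM.ne'
    set f : ℝ → ℝ := fun x =>
      (∑ j ∈ Finset.range M, bernoulliFun (m+1) ((x + j)/M)) * (M:ℝ)^(m+1)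
        - M * bernoulliFun (m+1) x with hf
    have hderiv : ∀ x : ℝ, HasDerivAt f 0 x := by
      intro x
      have hsum : HasDerivAt (fun x => ∑ j ∈ Finset.range M, bernoulliFun (m+1) ((x + j)/M))
          (∑ j ∈ Finset.range M, (m+1) * bernoulliFun m ((x + j)/M) / M) x :=
        HasDerivAt.fun_sum (fun j _ => hasDerivAt_bF_affine m j M x)
      have h2 : HasDerivAt f
          ((∑ j ∈ Finset.range M, (m+1) * bernoulliFun m ((x + j)/M) / M) * (M:ℝ)^(m+1)
            - M * ((m+1) * bernoulliFun m x)) x := by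
        have := (hsum.mul_const ((M:ℝ)^(m+1))).sub
          ((hasDerivAt_bernoulliFun (m+1) x).const_mul (M:ℝ))
        refine this.congr_deriv ?_
        simp
      convert h2 using 1
      have hIH := IH M hM x
      have hS : (∑ j ∈ Finset.range M, (m+1) * bernoulliFun m ((x + j)/M) / M)
          = ((m:ℝ)+1) / M * (∑ j ∈ Finset.range M, bernoulliFun m ((x + j)/M)) := by
        rw [Finset.mul_sum]; apply Finset.sum_congr rfl; intro j _; push_cast; ring
      rw [hS]
      have he : ((m:ℝ)+1) / M * (∑ j ∈ Finset.range M, bernoulliFun m ((x + j)/M)) * (M:ℝ)^(m+1)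
          = ((m:ℝ)+1) * ((∑ j ∈ Finset.range M, bernoulliFun m ((x + j)/M)) * (M:ℝ)^m) := by
        field_simp; ring
      rw [he, hIH]; push_cast; ring
    have hconst : ∀ x y : ℝ, f x = f y :=
      is_const_of_deriv_eq_zero (fun x => (hderiv x).differentiableAt)
        (fun x => (hderiv x).deriv)
    set F : ℝ → ℝ := fun x =>
      (∑ j ∈ Finset.range M, bernoulliFun (m+2) ((x + j)/M) * ((M:ℝ) / ((m:ℝ)+2))) * (M:ℝ)^(m+1)
        - M * (bernoulliFun (m+2) x / ((m:ℝ)+2)) with hF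
    have hFderiv : ∀ x : ℝ, HasDerivAt F (f x) x := by
      intro x
      have hterm : ∀ j : ℕ,
          HasDerivAt (fun x => bernoulliFun (m+2) ((x + j)/M) * ((M:ℝ)/((m:ℝ)+2)))
            (bernoulliFun (m+1) ((x + j)/M)) x := by
        intro j
        have h := (hasDerivAt_bF_affine (m+1) j M x).mul_const ((M:ℝ)/((m:ℝ)+2))
        refine h.congr_deriv ?_
        push_cast
        field_simp
        ring
      have hsum : HasDerivAt
          (fun x => ∑ j ∈ Finset.range M, bernoulliFun (m+2) ((x + j)/M) * ((M:ℝ)/((m:ℝ)+2)))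
          (∑ j ∈ Finset.range M, bernoulliFun (m+1) ((x + j)/M)) x :=
        HasDerivAt.fun_sum (fun j _ => hterm j)
      have h2 := (hsum.mul_const ((M:ℝ)^(m+1))).sub
        ((antideriv_bernoulliFun (m+1) x).const_mul (M:ℝ))
      have hcast : (fun x => (∑ j ∈ Finset.range M,
            bernoulliFun (m+2) ((x + j)/M) * ((M:ℝ)/((m:ℝ)+2))) * (M:ℝ)^(m+1)
          - (M:ℝ) * (bernoulliFun (m+1+1) x / (((m+1:ℕ):ℝ) + 1))) = F := by
        funext y
        simp only [hF]
        have hc2 : ((m+1:ℕ):ℝ) + 1 = (m:ℝ) + 2 := by push_cast; ring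
        rw [show m+1+1 = m+2 from rfl, hc2]
      rw [← hcast]
      exact h2
    have hint : (∫ x in (0:ℝ)..1, f x) = F 1 - F 0 := by
      apply intervalIntegral.integral_eq_sub_of_hasDerivAt (fun x _ => hFderiv x)
      have hc : Continuous f := by
        rw [continuous_iff_continuousAt]
        exact fun x => (hderiv x).differentiableAt.continuousAt
      exact hc.intervalIntegrable 0 1
    have hconstint : (∫ x in (0:ℝ)..1, f x) = f 0 := by
      rw [intervalIntegral.integral_congr (g := fun _ => f 0) (fun x _ => hconst x 0)]
      simp only [intervalIntegral.integral_const, smul_eq_mul, sub_zero, one_mul]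
    have htel : F 1 - F 0 = 0 := by
      have h1 : ∀ x : ℝ, F x = (M:ℝ) / ((m:ℝ)+2) * (M:ℝ)^(m+1) *
          (∑ j ∈ Finset.range M, bernoulliFun (m+2) ((x + j)/M))
          - (M:ℝ) / ((m:ℝ)+2) * bernoulliFun (m+2) x := by
        intro x; simp only [hF]; rw [← Finset.sum_mul]; ring
      rw [h1, h1]
      have htel2 : (∑ j ∈ Finset.range M, bernoulliFun (m+2) ((1 + j)/M))
          - (∑ j ∈ Finset.range M, bernoulliFun (m+2) ((0 + j)/M)) = 0 := by
        rw [← Finset.sum_sub_distrib]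
        have hstep := Finset.sum_range_sub (f := fun j : ℕ => bernoulliFun (m+2) ((j:ℝ)/M)) M
        have hcongr : (∑ j ∈ Finset.range M,
            (bernoulliFun (m+2) ((1 + j)/M) - bernoulliFun (m+2) ((0 + j)/M)))
            = ∑ j ∈ Finset.range M,
              (bernoulliFun (m+2) (((j+1:ℕ):ℝ)/M) - bernoulliFun (m+2) (((j:ℕ):ℝ)/M)) := by
          apply Finset.sum_congr rfl
          intro j _
          congr 2 <;> push_cast <;> ring
        rw [hcongr, hstep]
        rw [div_self hM0]
        norm_num
        exact sub_eq_zero.mpr (bernoulliFun_endpoints_eq_of_ne_one (by omega))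
      have hone : bernoulliFun (m+2) 1 = bernoulliFun (m+2) 0 :=
        bernoulliFun_endpoints_eq_of_ne_one (by omega)
      have hsums : (∑ j ∈ Finset.range M, bernoulliFun (m+2) ((1 + j)/M))
          = (∑ j ∈ Finset.range M, bernoulliFun (m+2) ((0 + j)/M)) := by
        linarith
      rw [hone, hsums]; ring
    have hzero : f x = 0 := by
      have h := hconst x 0
      rw [h, ← hconstint, hint, htel]
    simp only [hf] at hzero
    linarith

open Complex

lemma integral_cexp (k : ℤ) :
    (∫ x in (0:ℝ)..1, Complex.exp (2 * (Real.pi:ℂ) * I * (k:ℂ) * (x:ℂ)))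
      = if k = 0 then 1 else 0 := by
  split_ifs with h
  · subst h; simp
  · have hc : (2 * (Real.pi:ℂ) * I * (k:ℂ)) ≠ 0 := by
      simp [Real.pi_ne_zero, Complex.I_ne_zero, h]
    rw [integral_exp_mul_complex hc]
    simp only [Complex.ofReal_one, Complex.ofReal_zero]
    have h1 : (2 * (Real.pi:ℂ) * I * (k:ℂ)) * 1 = (k:ℂ) * (2 * (Real.pi:ℂ) * I) := by ring
    rw [h1, Complex.exp_int_mul_two_pi_mul_I]
    simp

lemma sum_cexp_eq_zero (M : ℕ) (hM : 0 < M) (k : ℤ) (hk : k ≠ 0) (hkM : k.natAbs < M)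
    (α : ℝ) :
    ∑ j ∈ Finset.range M,
      Complex.exp (2 * (Real.pi:ℂ) * I * (k:ℂ) * (((α + j)/M : ℝ) : ℂ)) = 0 := by
  have hM0c : (M:ℂ) ≠ 0 := Nat.cast_ne_zero.mpr hM.ne'
  set z : ℂ := Complex.exp (2 * (Real.pi:ℂ) * I * (k:ℂ) / M) with hz
  have hterm : ∀ j : ℕ,
      Complex.exp (2 * (Real.pi:ℂ) * I * (k:ℂ) * (((α + j)/M : ℝ) : ℂ))
        = Complex.exp (2 * (Real.pi:ℂ) * I * (k:ℂ) * (α:ℂ) / M) * z ^ j := by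
    intro j
    rw [hz, ← Complex.exp_nat_mul, ← Complex.exp_add]
    congr 1
    push_cast
    field_simp
  simp only [hterm]
  rw [← Finset.mul_sum]
  have h2πI : (2 * (Real.pi:ℂ) * I) ≠ 0 := by
    simp [Real.pi_ne_zero, Complex.I_ne_zero]
  have hz1 : z ≠ 1 := by
    intro hcon
    rw [hz, Complex.exp_eq_one_iff] at hcon
    obtain ⟨t, ht⟩ := hcon
    have e2 : (2 * (Real.pi:ℂ) * I) * ((k:ℂ)/M) = (2 * (Real.pi:ℂ) * I) * (t:ℂ) := by
      linear_combination ht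
    have e3 : (k:ℂ)/M = (t:ℂ) := mul_left_cancel₀ h2πI e2
    have e4 : (k:ℂ) = (t:ℂ) * (M:ℂ) := by
      rw [div_eq_iff hM0c] at e3; exact e3
    have e5 : k = t * M := by exact_mod_cast e4
    have ht0 : t ≠ 0 := by
      intro h0; rw [h0] at e5; simp at e5; exact hk e5
    have habs : k.natAbs = t.natAbs * M := by rw [e5]; simp [Int.natAbs_mul]
    have := Nat.le_mul_of_pos_left M (Nat.pos_of_ne_zero (Int.natAbs_ne_zero.mpr ht0))
    omega
  have hzM : z ^ M = 1 := by
    rw [hz, ← Complex.exp_nat_mul]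
    have : (M:ℂ) * (2 * (Real.pi:ℂ) * I * (k:ℂ) / M) = (k:ℂ) * (2 * (Real.pi:ℂ) * I) := by
      field_simp
    rw [this, Complex.exp_int_mul_two_pi_mul_I]
  rw [geom_sum_eq hz1, hzM]
  simp


lemma bernoulliPoly_eq (m : ℕ) (x : ℝ) : bernoulliPoly m x = bernoulliFun m x := by
  simp [bernoulliPoly, bernoulliFun, Polynomial.aeval_def, Polynomial.eval_map]

lemma bernoulliPer_eq_fun {m : ℕ} (hm : m ≠ 1) {x : ℝ} (hx : x ∈ Set.Icc (0:ℝ) 1) :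
    bernoulliPer m x = bernoulliFun m x := by
  rcases eq_or_lt_of_le hx.2 with h1 | h1
  · rw [h1]
    show bernoulliPoly m (1 - (⌊(1:ℝ)⌋ : ℝ)) = bernoulliFun m 1
    rw [Int.floor_one, bernoulliFun_endpoints_eq_of_ne_one hm]
    norm_num [bernoulliPoly_eq]
  · have h0 : ⌊x⌋ = 0 := Int.floor_eq_zero_iff.mpr ⟨hx.1, h1⟩
    show bernoulliPoly m (x - (⌊x⌋ : ℝ)) = bernoulliFun m x
    rw [h0, bernoulliPoly_eq]
    norm_num

theorem majorant_lower_bound (n N : ℕ) (hn : 1 ≤ n)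
    (α : ℝ) (hαmem : α ∈ Set.Icc (0 : ℝ) 1)
    (hα : ∀ x ∈ Set.Icc (0 : ℝ) 1, bernoulliPoly (n + 1) x ≤ bernoulliPoly (n + 1) α)
    (Q : ℝ → ℝ) (hQtrig : IsTrigPoly N (fun x => (Q x : ℂ)))
    (hQge : ∀ x : ℝ, bernoulliPer (n + 1) x ≤ Q x) :
    (∫ x in (0 : ℝ)..1, (Q x - bernoulliPer (n + 1) x)) ≥
      bernoulliPoly (n + 1) α / ((N : ℝ) + 1) ^ (n + 1) := by
  obtain ⟨c, hc⟩ := hQtrig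
  set M : ℕ := N + 1 with hMdef
  have hMpos : 0 < M := Nat.succ_pos N
  have hM0 : (M:ℝ) ≠ 0 := Nat.cast_ne_zero.mpr hMpos.ne'
  -- continuity of Q
  have hQcontC : Continuous fun x : ℝ => (Q x : ℂ) := by
    have heq : (fun x : ℝ => (Q x : ℂ)) = fun x : ℝ =>
        ∑ k ∈ Finset.Icc (-(N : ℤ)) (N : ℤ),
          c k * Complex.exp (2 * (Real.pi : ℂ) * Complex.I * (k : ℂ) * (x : ℂ)) :=
      funext hc
    rw [heq]
    apply continuous_finset_sum
    intro k _
    exact continuous_const.mul (Complex.continuous_exp.comp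
      (continuous_const.mul Complex.continuous_ofReal))
  have hQcont : Continuous Q := by
    have := Complex.continuous_re.comp hQcontC
    exact this
  -- integral of Q equals c 0
  have hIQ : (∫ x in (0:ℝ)..1, (Q x : ℂ)) = c 0 := by
    rw [intervalIntegral.integral_congr (g := fun x : ℝ =>
        ∑ k ∈ Finset.Icc (-(N : ℤ)) (N : ℤ),
          c k * Complex.exp (2 * (Real.pi : ℂ) * Complex.I * (k : ℂ) * (x : ℂ)))
        (fun x _ => hc x)]
    rw [intervalIntegral.integral_finset_sum]
    · have h1 : ∀ k ∈ Finset.Icc (-(N : ℤ)) (N : ℤ),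
          (∫ x in (0:ℝ)..1, c k * Complex.exp (2 * (Real.pi : ℂ) * Complex.I * (k : ℂ) * (x : ℂ)))
            = if k = 0 then c k else 0 := by
        intro k _
        rw [intervalIntegral.integral_const_mul, integral_cexp k]
        split_ifs <;> simp
      rw [Finset.sum_congr rfl h1, Finset.sum_ite_eq' (Finset.Icc (-(N : ℤ)) (N : ℤ)) 0 c]
      simp
    · intro k _
      exact (continuous_const.mul (Complex.continuous_exp.comp
        (continuous_const.mul Complex.continuous_ofReal))).intervalIntegrable 0 1
  have hc0 : c 0 = ((∫ x in (0:ℝ)..1, Q x : ℝ) : ℂ) := by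
    rw [← hIQ, intervalIntegral.integral_ofReal]
  -- sampling identity
  have hsamp : (∑ j ∈ Finset.range M, (Q ((α + j)/M) : ℂ)) = (M : ℂ) * c 0 := by
    have hstep : ∀ j ∈ Finset.range M, (Q ((α + j)/M) : ℂ)
        = ∑ k ∈ Finset.Icc (-(N : ℤ)) (N : ℤ),
            c k * Complex.exp (2 * (Real.pi : ℂ) * Complex.I * (k : ℂ) * ((((α + j)/M : ℝ)) : ℂ)) :=
      fun j _ => hc _
    rw [Finset.sum_congr rfl hstep, Finset.sum_comm]
    have h2 : ∀ k ∈ Finset.Icc (-(N : ℤ)) (N : ℤ),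
        (∑ j ∈ Finset.range M,
          c k * Complex.exp (2 * (Real.pi : ℂ) * Complex.I * (k : ℂ) * ((((α + j)/M : ℝ)) : ℂ)))
          = if k = 0 then (M : ℂ) * c 0 else 0 := by
      intro k hk
      rw [← Finset.mul_sum]
      split_ifs with h0
      · subst h0
        simp [mul_comm]
      · have hkM : k.natAbs < M := by
          simp only [Finset.mem_Icc] at hk
          omega
        rw [sum_cexp_eq_zero M hMpos k h0 hkM α, mul_zero]
    rw [Finset.sum_congr rfl h2,
      Finset.sum_ite_eq' (Finset.Icc (-(N : ℤ)) (N : ℤ)) 0 (fun _ => (M : ℂ) * c 0)]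
    simp
  -- real version of sampling
  have hsampR : (∑ j ∈ Finset.range M, Q ((α + j)/M)) = M * ∫ x in (0:ℝ)..1, Q x := by
    rw [hc0] at hsamp
    exact_mod_cast hsamp
  -- sample points in [0,1]
  have hmem : ∀ j ∈ Finset.range M, (α + j)/M ∈ Set.Icc (0:ℝ) 1 := by
    intro j hj
    simp only [Finset.mem_range] at hj
    have hj' : (j:ℝ) ≤ (N:ℝ) := by exact_mod_cast Nat.lt_succ_iff.mp hj
    constructor
    · apply div_nonneg (by linarith [hαmem.1]) (by positivity)
    · rw [div_le_one (by positivity)]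
      push_cast [hMdef]
      linarith [hαmem.2]
  -- lower bound on the samples
  have hlow : (∑ j ∈ Finset.range M, bernoulliFun (n+1) ((α + j)/M))
      ≤ ∑ j ∈ Finset.range M, Q ((α + j)/M) := by
    apply Finset.sum_le_sum
    intro j hj
    rw [← bernoulliPer_eq_fun (by omega) (hmem j hj)]
    exact hQge _
  -- Raabe
  have hraabe := raabe (n+1) M hMpos α
  -- conclude the key inequality on ∫ Q
  have hBint : (bernoulliFun (n+1) α) / (M:ℝ)^(n+1) ≤ ∫ x in (0:ℝ)..1, Q x := by
    rw [div_le_iff₀ (by positivity)]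
    have h3 : (M:ℝ) * bernoulliFun (n+1) α ≤ (M * ∫ x in (0:ℝ)..1, Q x) * (M:ℝ)^(n+1) := by
      rw [← hraabe, ← hsampR]
      have := mul_le_mul_of_nonneg_right hlow (by positivity : (0:ℝ) ≤ (M:ℝ)^(n+1))
      linarith
    have hMp : (0:ℝ) < M := by positivity
    nlinarith [pow_pos hMp (n+1)]
  -- rewrite integral of difference
  have hsplit : (∫ x in (0:ℝ)..1, (Q x - bernoulliPer (n+1) x))
      = (∫ x in (0:ℝ)..1, Q x) := by
    rw [intervalIntegral.integral_congr (g := fun x => Q x - bernoulliFun (n+1) x)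
        (fun x hx => by
          rw [Set.uIcc_of_le (by norm_num : (0:ℝ) ≤ 1)] at hx
          rw [bernoulliPer_eq_fun (by omega) hx])]
    have hbc : Continuous fun x : ℝ => bernoulliFun (n+1) x := by
      simp only [bernoulliFun]; exact Polynomial.continuous _
    rw [intervalIntegral.integral_sub (hQcont.intervalIntegrable 0 1)
        (hbc.intervalIntegrable 0 1),
      integral_bernoulliFun_eq_zero (by omega), sub_zero]
  rw [ge_iff_le, hsplit, bernoulliPoly_eq]
  have hcast : ((N:ℝ) + 1) = (M:ℝ) := by push_cast [hMdef]; ring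
  rw [hcast]
  exact hBint
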